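/- Re-orthogonalization via the implicit function theorem: let p: I → ℝⁿ be a C¹ family (I an open interval), and for each (φ,θ) let n⁽¹⁾_{φ,θ}, n⁽²⁾_{φ,θ} ∈ ℝ²ⁿ depend continuously differentiably on (φ,θ), with the normalization that the 2×2 matrix of pairings of (n⁽¹⁾, n⁽²⁾) against the tangent vectors (∂_θ, ∂_φ) of the map (φ,θ) ↦ e^{iθ}p(φ) is the identity at (φ̄,θ̄). Then there exists μ₀ > 0 such that for every z̄ ∈ ℂⁿ with ‖z̄‖ < μ₀ there exist (φ̂, θ̂, ẑ) with e^{iθ̄}p(φ̄) + z̄ = e^{iθ̂}p(φ̂) + ẑ and ⟨n⁽¹⁾_{φ̂,θ̂}, ẑ⟩ = ⟨n⁽²⁾_{φ̂,θ̂}, ẑ⟩ = 0. -/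

import Mathlib

set_option maxRecDepth 8000 in
/-- Re-orthogonalization via the implicit function theorem: any point near the
cylinder (φ,θ) ↦ e^{iθ}p(φ) can be written as e^{iθ̂}p(φ̂) + ẑ with ẑ orthogonal
(in the real inner product) to n⁽¹⁾, n⁽²⁾ at (φ̂,θ̂). -/
theorem stmt17 {n : ℕ} (p : ℝ → EuclideanSpace ℂ (Fin n)) (dp : EuclideanSpace ℂ (Fin n))
    (n1 n2 : ℝ → ℝ → EuclideanSpace ℂ (Fin n)) (φb θb : ℝ)
    (hp : ContDiffAt ℝ 1 p φb) (hdp : HasDerivAt p dp φb)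
    (hn1 : ContDiffAt ℝ 1 (fun x : ℝ × ℝ => n1 x.1 x.2) (φb, θb))
    (hn2 : ContDiffAt ℝ 1 (fun x : ℝ × ℝ => n2 x.1 x.2) (φb, θb))
    (hN11 : (inner ℂ (n1 φb θb)
      ((Complex.I * Complex.exp (Complex.I * (θb : ℂ))) • p φb) : ℂ).re = 1)
    (hN12 : (inner ℂ (n1 φb θb) (Complex.exp (Complex.I * (θb : ℂ)) • dp) : ℂ).re = 0)
    (hN21 : (inner ℂ (n2 φb θb)
      ((Complex.I * Complex.exp (Complex.I * (θb : ℂ))) • p φb) : ℂ).re = 0)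
    (hN22 : (inner ℂ (n2 φb θb) (Complex.exp (Complex.I * (θb : ℂ)) • dp) : ℂ).re = 1) :
    ∃ μ0 > (0 : ℝ), ∀ zb : EuclideanSpace ℂ (Fin n), ‖zb‖ < μ0 →
      ∃ φh θh : ℝ, ∃ zh : EuclideanSpace ℂ (Fin n),
        Complex.exp (Complex.I * (θb : ℂ)) • p φb + zb
          = Complex.exp (Complex.I * (θh : ℂ)) • p φh + zh ∧
        (inner ℂ (n1 φh θh) zh : ℂ).re = 0 ∧ (inner ℂ (n2 φh θh) zh : ℂ).re = 0 := by
  classical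
  set x0 : (ℝ × ℝ) × EuclideanSpace ℂ (Fin n) := ((φb, θb), 0) with hx0def
  have hps : HasStrictDerivAt p dp φb := by
    have h := hp.hasStrictDerivAt one_ne_zero
    rwa [hdp.deriv] at h
  have hes : HasStrictDerivAt (fun θ : ℝ => Complex.exp (Complex.I * (θ : ℂ)))
      (Complex.I * Complex.exp (Complex.I * (θb : ℂ))) θb := by
    have h0 : HasStrictDerivAt (fun θ : ℝ => Complex.I * (θ : ℂ)) Complex.I θb := by
      simpa using (Complex.ofRealCLM.hasStrictDerivAt (x := θb)).const_mul Complex.I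
    simpa [mul_comm] using h0.cexp
  set pφ : ((ℝ × ℝ) × EuclideanSpace ℂ (Fin n)) →L[ℝ] ℝ :=
    (ContinuousLinearMap.fst ℝ ℝ ℝ).comp
      (ContinuousLinearMap.fst ℝ (ℝ × ℝ) (EuclideanSpace ℂ (Fin n))) with hpφ
  set pθ : ((ℝ × ℝ) × EuclideanSpace ℂ (Fin n)) →L[ℝ] ℝ :=
    (ContinuousLinearMap.snd ℝ ℝ ℝ).comp
      (ContinuousLinearMap.fst ℝ (ℝ × ℝ) (EuclideanSpace ℂ (Fin n))) with hpθ
  set pz : ((ℝ × ℝ) × EuclideanSpace ℂ (Fin n)) →L[ℝ] EuclideanSpace ℂ (Fin n) :=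
    ContinuousLinearMap.snd ℝ (ℝ × ℝ) (EuclideanSpace ℂ (Fin n)) with hpz
  have hPf : HasStrictFDerivAt (fun x : (ℝ × ℝ) × EuclideanSpace ℂ (Fin n) => p x.1.1)
      (((1 : ℝ →L[ℝ] ℝ).smulRight dp).comp pφ) x0 :=
    HasStrictFDerivAt.comp x0 hps.hasStrictFDerivAt pφ.hasStrictFDerivAt
  have hEf : HasStrictFDerivAt
      (fun x : (ℝ × ℝ) × EuclideanSpace ℂ (Fin n) => Complex.exp (Complex.I * (x.1.2 : ℂ)))
      (((1 : ℝ →L[ℝ] ℝ).smulRight (Complex.I * Complex.exp (Complex.I * (θb : ℂ)))).comp pθ)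
      x0 :=
    HasStrictFDerivAt.comp x0 hes.hasStrictFDerivAt pθ.hasStrictFDerivAt
  set G : ((ℝ × ℝ) × EuclideanSpace ℂ (Fin n)) →L[ℝ] EuclideanSpace ℂ (Fin n) :=
    Complex.exp (Complex.I * (θb : ℂ)) • (((1 : ℝ →L[ℝ] ℝ).smulRight dp).comp pφ) +
      ((((1 : ℝ →L[ℝ] ℝ).smulRight
        (Complex.I * Complex.exp (Complex.I * (θb : ℂ)))).comp pθ).smulRight (p φb)) with hG
  have hgf : HasStrictFDerivAt
      (fun x : (ℝ × ℝ) × EuclideanSpace ℂ (Fin n) =>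
        Complex.exp (Complex.I * (x.1.2 : ℂ)) • p x.1.1) G x0 := hEf.smul hPf
  set q : EuclideanSpace ℂ (Fin n) := Complex.exp (Complex.I * (θb : ℂ)) • p φb with hq
  set zf : (ℝ × ℝ) × EuclideanSpace ℂ (Fin n) → EuclideanSpace ℂ (Fin n) :=
    fun x => q + x.2 - Complex.exp (Complex.I * (x.1.2 : ℂ)) • p x.1.1 with hzf
  have hzf0 : zf x0 = 0 := by simp [hzf, hx0def, hq]
  have hzfd : HasStrictFDerivAt zf (pz - G) x0 :=
    ((pz.hasStrictFDerivAt).const_add q).sub hgf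
  obtain ⟨N1, hN1⟩ : ∃ N1, HasStrictFDerivAt
      (fun x : (ℝ × ℝ) × EuclideanSpace ℂ (Fin n) => n1 x.1.1 x.1.2) N1 x0 := by
    have h := (hn1.comp x0 contDiff_fst.contDiffAt).hasStrictFDerivAt one_ne_zero
    exact ⟨_, by simpa [Function.comp_def] using h⟩
  obtain ⟨N2, hN2⟩ : ∃ N2, HasStrictFDerivAt
      (fun x : (ℝ × ℝ) × EuclideanSpace ℂ (Fin n) => n2 x.1.1 x.1.2) N2 x0 := by
    have h := (hn2.comp x0 contDiff_fst.contDiffAt).hasStrictFDerivAt one_ne_zero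
    exact ⟨_, by simpa [Function.comp_def] using h⟩
  set a1 : EuclideanSpace ℂ (Fin n) →L[ℝ] ℝ :=
    Complex.reCLM.comp ((innerSL ℂ (n1 φb θb)).restrictScalars ℝ) with ha1
  set a2 : EuclideanSpace ℂ (Fin n) →L[ℝ] ℝ :=
    Complex.reCLM.comp ((innerSL ℂ (n2 φb θb)).restrictScalars ℝ) with ha2
  have hsmul : ∀ (r : ℝ) (u w : EuclideanSpace ℂ (Fin n)),
      (inner ℂ u (r • w) : ℂ).re = r * (inner ℂ u w : ℂ).re := by
    intro r u w
    rw [← Complex.coe_smul, inner_smul_right, Complex.re_ofReal_mul]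
  have hF1 : HasStrictFDerivAt
      (fun x : (ℝ × ℝ) × EuclideanSpace ℂ (Fin n) =>
        (inner ℂ (n1 x.1.1 x.1.2) (zf x) : ℂ).re) (a1.comp pz - pθ) x0 := by
    have h := Complex.reCLM.hasStrictFDerivAt.comp x0 (hN1.inner ℂ hzfd)
    refine h.congr_fderiv (Eq.symm ?_)
    rw [hzf0]
    refine ContinuousLinearMap.ext fun v => ?_
    simp only [ha1, ha2, hG, hpφ, hpθ, hpz, ContinuousLinearMap.sub_apply, ContinuousLinearMap.comp_apply,
      ContinuousLinearMap.coe_comp', Function.comp_apply, Complex.reCLM_apply,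
      fderivInnerCLM_apply, ContinuousLinearMap.prod_apply, inner_zero_right, add_zero,
      ContinuousLinearMap.add_apply, ContinuousLinearMap.smul_apply,
      ContinuousLinearMap.smulRight_apply, ContinuousLinearMap.one_apply,
      ContinuousLinearMap.coe_fst', ContinuousLinearMap.coe_snd',
      ContinuousLinearMap.coe_restrictScalars', innerSL_apply_apply,
      inner_sub_right, inner_add_right, Complex.sub_re, Complex.add_re]
    rw [smul_comm, smul_assoc, hsmul, hsmul, hN11, hN12]
    ring
  have hF2 : HasStrictFDerivAt
      (fun x : (ℝ × ℝ) × EuclideanSpace ℂ (Fin n) =>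
        (inner ℂ (n2 x.1.1 x.1.2) (zf x) : ℂ).re) (a2.comp pz - pφ) x0 := by
    have h := Complex.reCLM.hasStrictFDerivAt.comp x0 (hN2.inner ℂ hzfd)
    refine h.congr_fderiv (Eq.symm ?_)
    rw [hzf0]
    refine ContinuousLinearMap.ext fun v => ?_
    simp only [ha1, ha2, hG, hpφ, hpθ, hpz, ContinuousLinearMap.sub_apply, ContinuousLinearMap.comp_apply,
      ContinuousLinearMap.coe_comp', Function.comp_apply, Complex.reCLM_apply,
      fderivInnerCLM_apply, ContinuousLinearMap.prod_apply, inner_zero_right, add_zero,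
      ContinuousLinearMap.add_apply, ContinuousLinearMap.smul_apply,
      ContinuousLinearMap.smulRight_apply, ContinuousLinearMap.one_apply,
      ContinuousLinearMap.coe_fst', ContinuousLinearMap.coe_snd',
      ContinuousLinearMap.coe_restrictScalars', innerSL_apply_apply,
      inner_sub_right, inner_add_right, Complex.sub_re, Complex.add_re]
    rw [smul_comm, smul_assoc, hsmul, hsmul, hN21, hN22]
    ring
  -- the full map and its invertible derivative
  set D : ((ℝ × ℝ) × EuclideanSpace ℂ (Fin n)) →L[ℝ] (ℝ × ℝ) × EuclideanSpace ℂ (Fin n) :=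
    ((a1.comp pz - pθ).prod (a2.comp pz - pφ)).prod pz with hD
  set M : ((ℝ × ℝ) × EuclideanSpace ℂ (Fin n)) →L[ℝ] (ℝ × ℝ) × EuclideanSpace ℂ (Fin n) :=
    ((a2.comp pz - pθ).prod (a1.comp pz - pφ)).prod pz with hM
  have hMD : Function.LeftInverse M D := by
    intro v
    refine Prod.ext (Prod.ext ?_ ?_) ?_ <;>
      simp only [hD, hM, ha1, ha2, hpφ, hpθ, hpz, ContinuousLinearMap.sub_apply,
          ContinuousLinearMap.comp_apply, ContinuousLinearMap.coe_comp', Function.comp_apply,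
          Complex.reCLM_apply, ContinuousLinearMap.prod_apply, ContinuousLinearMap.coe_fst',
          ContinuousLinearMap.coe_snd', ContinuousLinearMap.coe_restrictScalars',
          innerSL_apply_apply] <;>
      ring
  have hDM : Function.RightInverse M D := by
    intro v
    refine Prod.ext (Prod.ext ?_ ?_) ?_ <;>
      simp only [hD, hM, ha1, ha2, hpφ, hpθ, hpz, ContinuousLinearMap.sub_apply,
          ContinuousLinearMap.comp_apply, ContinuousLinearMap.coe_comp', Function.comp_apply,
          Complex.reCLM_apply, ContinuousLinearMap.prod_apply, ContinuousLinearMap.coe_fst',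
          ContinuousLinearMap.coe_snd', ContinuousLinearMap.coe_restrictScalars',
          innerSL_apply_apply] <;>
      ring
  set Leq : ((ℝ × ℝ) × EuclideanSpace ℂ (Fin n)) ≃L[ℝ] (ℝ × ℝ) × EuclideanSpace ℂ (Fin n) :=
    ContinuousLinearEquiv.equivOfInverse D M hMD hDM with hLeq
  have hK : HasStrictFDerivAt
      (fun x : (ℝ × ℝ) × EuclideanSpace ℂ (Fin n) =>
        (((inner ℂ (n1 x.1.1 x.1.2) (zf x) : ℂ).re, (inner ℂ (n2 x.1.1 x.1.2) (zf x) : ℂ).re),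
          x.2))
      ((Leq : ((ℝ × ℝ) × EuclideanSpace ℂ (Fin n)) →L[ℝ]
        (ℝ × ℝ) × EuclideanSpace ℂ (Fin n))) x0 := by
    have hco : (Leq : ((ℝ × ℝ) × EuclideanSpace ℂ (Fin n)) →L[ℝ]
        (ℝ × ℝ) × EuclideanSpace ℂ (Fin n)) = D := by
      refine ContinuousLinearMap.ext fun v => ?_
      simp [hLeq]
    rw [hco, hD]
    exact (hF1.prodMk hF2).prodMk pz.hasStrictFDerivAt
  have hmap := hK.map_nhds_eq_of_equiv
  have hKx0 : (fun x : (ℝ × ℝ) × EuclideanSpace ℂ (Fin n) =>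
      (((inner ℂ (n1 x.1.1 x.1.2) (zf x) : ℂ).re, (inner ℂ (n2 x.1.1 x.1.2) (zf x) : ℂ).re),
        x.2)) x0 = ((0, 0), (0 : EuclideanSpace ℂ (Fin n))) := by
    rw [hx0def] at hzf0
    simp [hzf0, hx0def]
  have hrange : Set.range (fun x : (ℝ × ℝ) × EuclideanSpace ℂ (Fin n) =>
      (((inner ℂ (n1 x.1.1 x.1.2) (zf x) : ℂ).re, (inner ℂ (n2 x.1.1 x.1.2) (zf x) : ℂ).re),
        x.2)) ∈ nhds ((((0 : ℝ), (0 : ℝ)), (0 : EuclideanSpace ℂ (Fin n)))) := by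
    rw [← hKx0, ← hmap]
    exact Filter.range_mem_map
  obtain ⟨ε, hε, hball⟩ := Metric.mem_nhds_iff.1 hrange
  refine ⟨ε, hε, fun zb hzb => ?_⟩
  have hy : ((((0 : ℝ), (0 : ℝ)), zb) : (ℝ × ℝ) × EuclideanSpace ℂ (Fin n)) ∈
      Metric.ball ((((0 : ℝ), (0 : ℝ)), (0 : EuclideanSpace ℂ (Fin n)))) ε := by
    simp only [Metric.mem_ball, Prod.dist_eq, dist_self, dist_zero_right, max_self,
      max_lt_iff]
    exact ⟨hε, hzb⟩
  obtain ⟨x, hx⟩ := hball hy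
  have hx1 : (inner ℂ (n1 x.1.1 x.1.2) (zf x) : ℂ).re = 0 := congrArg (fun y => y.1.1) hx
  have hx2 : (inner ℂ (n2 x.1.1 x.1.2) (zf x) : ℂ).re = 0 := congrArg (fun y => y.1.2) hx
  have hx3 : x.2 = zb := congrArg (fun y => y.2) hx
  refine ⟨x.1.1, x.1.2, zf x, ?_, hx1, hx2⟩
  have hzfx : zf x = q + x.2 - Complex.exp (Complex.I * (x.1.2 : ℂ)) • p x.1.1 := rfl
  rw [hzfx, hx3, hq]
  abel
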